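/- Let X be a finite nonempty set, ν : X → ℝ≥0 with 𝔼_{x∈X}(ν(x)+1) ≤ C, let G : X → ℝ, and let 0 < ε < 1, 0 < σ < 1/2. Then there exists α ∈ [0,1] such that ∑_{n ∈ ℤ} 𝔼_{x ∈ X}( 1_{G(x) ∈ [ε(n-σ+α), ε(n+σ+α)]} (ν(x)+1) ) ≤ 2σC. -/

import Mathlib

open scoped BigOperators

open MeasureTheory Set in
private theorem good_shift_aux (σ : ℝ) (hσ : 0 < σ) (hσ2 : σ < 1 / 2) (r : ℝ) :
    (∫ α in (0:ℝ)..1,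
      (⋃ n : ℤ, Set.Icc ((n:ℝ) - σ) ((n:ℝ) + σ)).indicator (1 : ℝ → ℝ) (r - α)) = 2 * σ := by
  set T : Set ℝ := ⋃ n : ℤ, Set.Icc ((n:ℝ) - σ) ((n:ℝ) + σ) with hT
  set g : ℝ → ℝ := T.indicator 1 with hg
  have hTshift : ∀ u : ℝ, u + 1 ∈ T ↔ u ∈ T := by
    intro u
    simp only [hT, Set.mem_iUnion, Set.mem_Icc]
    constructor
    · rintro ⟨n, h1, h2⟩
      exact ⟨n - 1, by push_cast; constructor <;> linarith⟩
    · rintro ⟨n, h1, h2⟩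
      exact ⟨n + 1, by push_cast; constructor <;> linarith⟩
  have hper : Function.Periodic g 1 := by
    intro u
    by_cases h : u ∈ T
    · rw [hg, Set.indicator_of_mem ((hTshift u).2 h), Set.indicator_of_mem h]; rfl
    · rw [hg, Set.indicator_of_notMem (fun hc => h ((hTshift u).1 hc)),
        Set.indicator_of_notMem h]

  rw [intervalIntegral.integral_comp_sub_left g r, sub_zero]
  have h1 : (∫ u in (r-1)..(r-1)+1, g u) = ∫ u in (-(1:ℝ)/2)..(-(1:ℝ)/2)+1, g u :=
    hper.intervalIntegral_add_eq (r - 1) (-(1:ℝ)/2)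
  rw [show r = (r - 1) + 1 by ring, show (r - 1 + 1 - 1) = r - 1 by ring, h1]
  rw [show (-(1:ℝ)/2) + 1 = 1/2 by norm_num]
  have heq : Set.EqOn g ((Set.Icc (-σ) σ).indicator (1 : ℝ → ℝ))
      (Set.uIcc (-(1:ℝ)/2) (1/2)) := by
    intro u hu
    rw [Set.uIcc_of_le (by norm_num), Set.mem_Icc] at hu
    by_cases h : u ∈ Set.Icc (-σ) σ
    · have huT : u ∈ T := Set.mem_iUnion.2 ⟨0, by simpa using h⟩
      rw [hg, Set.indicator_of_mem huT, Set.indicator_of_mem h]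
    · have huT : u ∉ T := by
        intro hcT
        obtain ⟨n, hn⟩ := Set.mem_iUnion.1 hcT
        rw [Set.mem_Icc] at hn
        have hn0 : n = 0 := by
          have hb : -1 < (n:ℝ) ∧ (n:ℝ) < 1 := by
            constructor <;> nlinarith [hu.1, hu.2, hn.1, hn.2]
          have hb' : (-1:ℤ) < n ∧ n < 1 := by exact_mod_cast hb
          omega
        apply h
        rw [Set.mem_Icc]
        subst hn0
        push_cast at hn
        exact ⟨by linarith [hn.1], by linarith [hn.2]⟩
      rw [hg, Set.indicator_of_notMem huT, Set.indicator_of_notMem h]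
  rw [intervalIntegral.integral_congr heq]
  rw [intervalIntegral.integral_of_le (by norm_num : (-(1:ℝ)/2) ≤ 1/2)]
  rw [MeasureTheory.integral_indicator measurableSet_Icc]
  rw [MeasureTheory.Measure.restrict_restrict measurableSet_Icc]
  have hsub : Set.Icc (-σ) σ ∩ Set.Ioc (-(1:ℝ)/2) (1/2) = Set.Icc (-σ) σ := by
    refine Set.inter_eq_left.2 fun u hu => ?_
    rw [Set.mem_Icc] at hu
    exact ⟨by linarith [hu.1], by linarith [hu.2]⟩
  rw [hsub]
  simp [Real.volume_Icc]
  rw [max_eq_left (by linarith)]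
  ring

open MeasureTheory Set in
set_option maxHeartbeats 1000000 in
/-- Pigeonhole/Fubini step in the construction of σ-algebras from dual functions:
there is a shift `α ∈ [0,1]` such that the total weighted measure of the
`εσ`-neighbourhoods of the lattice `ε(ℤ + α)` under `G` is at most `2σC`. -/
theorem exists_good_shift {X : Type*} [Fintype X] [Nonempty X]
    (ν : X → ℝ) (hν : ∀ x, 0 ≤ ν x) (C : ℝ)
    (hC : (∑ x : X, (ν x + 1)) / (Fintype.card X : ℝ) ≤ C)
    (G : X → ℝ) (ε σ : ℝ) (hε : 0 < ε) (hε1 : ε < 1) (hσ : 0 < σ) (hσ2 : σ < 1 / 2) :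
    ∃ α : ℝ, α ∈ Set.Icc (0 : ℝ) 1 ∧
      (∑ᶠ n : ℤ,
        (∑ x : X, (if G x ∈ Set.Icc (ε * (n - σ + α)) (ε * (n + σ + α)) then ν x + 1 else 0)) /
          (Fintype.card X : ℝ)) ≤ 2 * σ * C := by
  classical
  set c : ℝ := (Fintype.card X : ℝ) with hc
  have hcpos : (0 : ℝ) < c := by
    have h0 : 0 < Fintype.card X := Fintype.card_pos
    rw [hc]
    exact_mod_cast h0
  set t : X → ℝ := fun x => G x / ε with ht
  set T : Set ℝ := ⋃ n : ℤ, Set.Icc ((n:ℝ) - σ) ((n:ℝ) + σ) with hT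
  have hTmeas : MeasurableSet T := MeasurableSet.iUnion fun n => measurableSet_Icc
  set g : ℝ → ℝ := T.indicator 1 with hg
  -- membership equivalence
  have hmem : ∀ (α : ℝ) (n : ℤ) (x : X),
      (G x ∈ Set.Icc (ε * (n - σ + α)) (ε * (n + σ + α))) ↔
        t x - α ∈ Set.Icc ((n:ℝ) - σ) ((n:ℝ) + σ) := by
    intro α n x
    simp only [Set.mem_Icc, ht, le_sub_iff_add_le, sub_le_iff_le_add, le_div_iff₀ hε,
      div_le_iff₀ hε]
    constructor <;> rintro ⟨h1, h2⟩ <;> constructor <;> nlinarith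
  -- uniqueness via round
  have hround : ∀ (u : ℝ) (n : ℤ), u ∈ Set.Icc ((n:ℝ) - σ) ((n:ℝ) + σ) → round u = n := by
    intro u n hu
    rw [Set.mem_Icc] at hu
    rw [round_eq, Int.floor_eq_iff]
    constructor
    · push_cast; linarith [hu.1]
    · push_cast; linarith [hu.2]
  -- pointwise rewrite of the finsum
  have hF : ∀ α : ℝ,
      (∑ᶠ n : ℤ,
        (∑ x : X, (if G x ∈ Set.Icc (ε * (n - σ + α)) (ε * (n + σ + α)) then ν x + 1 else 0)) / c)
      = (∑ x : X, (ν x + 1) * g (t x - α)) / c := by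
    intro α
    set N : Finset ℤ := Finset.image (fun x : X => round (t x - α)) Finset.univ with hN
    have hsupp : (Function.support fun n : ℤ =>
        (∑ x : X, (if G x ∈ Set.Icc (ε * (n - σ + α)) (ε * (n + σ + α)) then ν x + 1 else 0)) / c)
        ⊆ ↑N := by
      intro n hn
      simp only [Function.mem_support, ne_eq, div_eq_zero_iff, not_or] at hn
      obtain ⟨x, -, hx⟩ := Finset.exists_ne_zero_of_sum_ne_zero hn.1
      have hPx : G x ∈ Set.Icc (ε * (n - σ + α)) (ε * (n + σ + α)) := by
        by_contra h; simp [h] at hx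
      have := hround _ _ ((hmem α n x).1 hPx)
      exact Finset.mem_coe.2 (Finset.mem_image.2 ⟨x, Finset.mem_univ x, this⟩)
    rw [finsum_eq_sum_of_support_subset _ hsupp, ← Finset.sum_div]
    congr 1
    rw [Finset.sum_comm]
    apply Finset.sum_congr rfl
    intro x _
    by_cases hx : (t x - α) ∈ T
    · obtain ⟨n, hn⟩ := Set.mem_iUnion.1 hx
      have hrx : round (t x - α) = n := hround _ _ hn
      rw [Finset.sum_eq_single_of_mem n
        (Finset.mem_image.2 ⟨x, Finset.mem_univ x, hrx⟩)
        (fun m _ hm => by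
          rw [if_neg]
          intro hcon
          exact hm ((hround _ _ ((hmem α m x).1 hcon)) ▸ hrx ▸ rfl))]
      · rw [if_pos ((hmem α n x).2 hn), hg, Set.indicator_of_mem hx]
        simp
    · rw [Finset.sum_eq_zero fun m _ => by
        rw [if_neg]
        intro hcon
        exact hx (Set.mem_iUnion.2 ⟨m, (hmem α m x).1 hcon⟩)]
      rw [hg, Set.indicator_of_notMem hx, mul_zero]
  -- interval integrability
  have hgmeas : Measurable g := measurable_one.indicator hTmeas
  have hgi : ∀ r : ℝ, IntervalIntegrable (fun α => g (r - α)) volume 0 1 := by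
    intro r
    have hmb : Measurable fun α : ℝ => g (r - α) := hgmeas.comp (measurable_const.sub measurable_id)
    constructor <;>
    · refine Measure.integrableOn_of_bounded (by simp) hmb.aestronglyMeasurable
        (M := 1) (ae_of_all _ fun a => ?_)
      rw [hg]
      by_cases h : (r - a) ∈ T <;> simp [Set.indicator_of_mem, Set.indicator_of_notMem, h]
  set F : ℝ → ℝ := fun α => (∑ x : X, (ν x + 1) * g (t x - α)) / c with hFdef
  have hsum : IntervalIntegrable (fun α => ∑ x : X, (ν x + 1) * g (t x - α)) volume 0 1 := by
    have h := IntervalIntegrable.sum (μ := volume) (a := 0) (b := 1)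
      (f := fun (x : X) (α : ℝ) => (ν x + 1) * g (t x - α))
      Finset.univ (fun x _ => (hgi (t x)).const_mul (ν x + 1))
    have he : (∑ x : X, fun α : ℝ => (ν x + 1) * g (t x - α))
        = fun α : ℝ => ∑ x : X, (ν x + 1) * g (t x - α) := by
      ext α; simp
    rwa [he] at h
  have hFi : IntervalIntegrable F volume 0 1 := hsum.div_const c
  -- integral of F
  have hintF : (∫ α in (0:ℝ)..1, F α) = 2 * σ * ((∑ x : X, (ν x + 1)) / c) := by
    rw [hFdef]
    simp only
    rw [intervalIntegral.integral_div, intervalIntegral.integral_finset_sum (μ := volume)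
      (f := fun (x : X) (α : ℝ) => (ν x + 1) * g (t x - α))
      (fun x _ => (hgi (t x)).const_mul (ν x + 1))]
    have : ∀ x : X, (∫ α in (0:ℝ)..1, (ν x + 1) * g (t x - α)) = (ν x + 1) * (2 * σ) := by
      intro x
      rw [intervalIntegral.integral_const_mul]
      congr 1
      exact good_shift_aux σ hσ hσ2 (t x)
    rw [Finset.sum_congr rfl fun x _ => this x, ← Finset.sum_mul]
    ring
  -- first moment method
  have hμ1 : volume (Set.Icc (0:ℝ) 1) = 1 := by simp
  have hFon : IntegrableOn F (Set.Icc (0:ℝ) 1) volume := by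
    have h1 : IntegrableOn F (Set.Ioc (0:ℝ) 1) volume := by
      have := hFi.1
      simpa [Set.uIoc_of_le (zero_le_one : (0:ℝ) ≤ 1)] using this
    exact h1.congr_set_ae (MeasureTheory.Ioc_ae_eq_Icc).symm
  obtain ⟨α, hα, hle⟩ := exists_le_setAverage (μ := volume) (s := Set.Icc (0:ℝ) 1)
    (by rw [hμ1]; exact one_ne_zero) (by rw [hμ1]; exact ENNReal.one_ne_top) hFon
  refine ⟨α, hα, ?_⟩
  have havg : (⨍ a in Set.Icc (0:ℝ) 1, F a ∂volume) = 2 * σ * ((∑ x : X, (ν x + 1)) / c) := by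
    rw [setAverage_eq, measureReal_def, hμ1]
    simp only [ENNReal.toReal_one, inv_one, one_smul]
    rw [← hintF, intervalIntegral.integral_of_le (zero_le_one : (0:ℝ) ≤ 1)]
    exact (setIntegral_congr_set MeasureTheory.Ioc_ae_eq_Icc).symm
  rw [hF α]
  calc F α ≤ ⨍ a in Set.Icc (0:ℝ) 1, F a ∂volume := hle
    _ = 2 * σ * ((∑ x : X, (ν x + 1)) / c) := havg
    _ ≤ 2 * σ * C := by
        apply mul_le_mul_of_nonneg_left hC (by linarith)
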